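/- Let u ∈ ℂ be a primitive 2d-th root of unity (so u^d = −1) and let c be the positive real d-th root of 2. Let j₁, j₂, j_y ∈ {0,…,d−1} and k₁, k₂, k_y odd with 0 < kᵢ < 2d. If the determinant of the 3×3 matrix with rows (u^{2j₁}, 1, u^{−k₁}c), (u^{2j₂}, 1, u^{−k₂}c), (1, u^{−k_y}c, u^{2j_y}) vanishes, then j₁ = j₂ and k₁ = k₂. In other words, no line of ℙ²(ℂ) contains two distinct sextactic points of the z-cluster of the Fermat curve F_d together with a sextactic point of the y-cluster. -/

import Mathlib

open IntermediateField Polynomial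

set_option synthInstance.maxHeartbeats 1000000
set_option maxHeartbeats 1000000

private lemma rat_pow_ne_four {d : ℕ} (hd : 3 ≤ d) (q : ℚ) : q ^ d ≠ 4 := by
  intro hq
  have hq0 : q ≠ 0 := by
    rintro rfl
    rw [zero_pow (by omega : d ≠ 0)] at hq
    norm_num at hq
  haveI : Fact (Nat.Prime 2) := ⟨Nat.prime_two⟩
  have h1 : padicValRat 2 (q ^ d) = d * padicValRat 2 q := padicValRat.pow q
  have h2 : padicValRat 2 (4:ℚ) = 2 := by
    rw [show (4:ℚ) = ((2^2 : ℕ):ℚ) by norm_num, padicValRat.of_nat, padicValNat.prime_pow]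
    norm_cast
  rw [hq, h2] at h1
  have hdvd : (d : ℤ) ∣ 2 := ⟨_, h1⟩
  have := Int.le_of_dvd (by norm_num) hdvd
  omega

private lemma exists_rat_of_fixed {K : IntermediateField ℚ ℂ}
    [Algebra.IsAlgebraic ℚ K] (x : K)
    (hfix : ∀ σ : K →ₐ[ℚ] ℂ, σ x = (x : ℂ)) : ∃ q : ℚ, (x : ℂ) = (q : ℂ) := by
  by_contra h
  push_neg at h
  have hint : IsIntegral ℚ x := Algebra.IsIntegral.isIntegral x
  have hxc : aeval (x : ℂ) (minpoly ℚ x) = 0 := by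
    have hco : (x:ℂ) = algebraMap K ℂ x := rfl
    rw [hco, Polynomial.aeval_algebraMap_apply, minpoly.aeval, map_zero]
  have hdeg : 2 ≤ (minpoly ℚ x).natDegree := by
    rw [minpoly.two_le_natDegree_iff hint]
    rintro ⟨q, hq⟩
    refine h q ?_
    rw [show ((x:ℂ)) = algebraMap K ℂ x from rfl, ← hq, ← IsScalarTower.algebraMap_apply]
    exact eq_ratCast (algebraMap ℚ ℂ) q
  have hsep : (minpoly ℚ x).Separable := (minpoly.irreducible hint).separable
  have hsplits : ((minpoly ℚ x).map (algebraMap ℚ ℂ)).Splits := IsAlgClosed.splits _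
  have hcard : 1 < Fintype.card ((minpoly ℚ x).rootSet ℂ) := by
    rw [card_rootSet_eq_natDegree hsep hsplits]; omega
  obtain ⟨⟨y, hy⟩, hne⟩ := Fintype.exists_ne_of_one_lt_card hcard
      ⟨(x:ℂ), by rw [mem_rootSet]; exact ⟨minpoly.ne_zero hint, hxc⟩⟩
  have hy0 : aeval y (minpoly ℚ x) = 0 := (mem_rootSet.mp hy).2
  obtain ⟨σ, hσ⟩ := IntermediateField.exists_algHom_of_splits_of_aeval
      (fun z => ⟨Algebra.IsIntegral.isIntegral z, IsAlgClosed.splits _⟩) hy0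
  exact hne (Subtype.ext (hσ.symm.trans (hfix σ)))

private lemma c_not_mem {d : ℕ} (hd : 3 ≤ d) {u : ℂ} (hu : IsPrimitiveRoot u (2 * d))
    {c : ℝ} (hc : 0 < c) (hcd : c ^ d = 2) :
    (c : ℂ) ∉ adjoin ℚ ({u} : Set ℂ) := by
  intro hmem
  have hd0 : d ≠ 0 := by omega
  have h2d0 : 2 * d ≠ 0 := by omega
  have hupow : u ^ (2 * d) = 1 := hu.pow_eq_one
  have hunorm : ‖u‖ = 1 := hu.norm'_eq_one h2d0
  have huK : u ∈ adjoin ℚ ({u} : Set ℂ) := subset_adjoin ℚ {u} rfl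
  set K := adjoin ℚ ({u} : Set ℂ) with hKdef
  haveI : Algebra.IsAlgebraic ℚ K := isAlgebraic_adjoin (fun x hx => by
    rw [Set.mem_singleton_iff] at hx
    subst hx
    exact ⟨X ^ (2*d) - C 1, monic_X_pow_sub_C 1 h2d0, by simp [hupow]⟩)
  have hconjmem : ∀ x : K, (starRingEnd ℂ) (x:ℂ) ∈ K := by
    have hmap : K.map ((Complex.conjAe.restrictScalars ℚ).toAlgHom) ≤ K := by
      rw [hKdef, adjoin_map]
      refine adjoin_le_iff.mpr ?_
      rintro x ⟨y, hy, rfl⟩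
      rw [Set.mem_singleton_iff] at hy
      rw [hy]
      have h1 : (Complex.conjAe.restrictScalars ℚ).toAlgHom u = u⁻¹ := by
        show Complex.conjAe u = u⁻¹
        rw [Complex.conjAe_coe, ← RCLike.inv_eq_conj hunorm]
      rw [h1]
      exact K.inv_mem huK
    intro x
    exact hmap ⟨(x:ℂ), x.2, rfl⟩
  let τ : K →ₐ[ℚ] K :=
    { toFun := fun x => ⟨(starRingEnd ℂ) (x:ℂ), hconjmem x⟩
      map_one' := Subtype.ext (by simp)
      map_mul' := fun x y => Subtype.ext (by push_cast; simp)
      map_zero' := Subtype.ext (by simp)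
      map_add' := fun x y => Subtype.ext (by push_cast; simp)
      commutes' := fun q => Subtype.ext (by
        simp [IntermediateField.algebraMap_apply]) }
  have hτ : ∀ x : K, ((τ x : K) : ℂ) = (starRingEnd ℂ) (x:ℂ) := fun x => rfl
  have hccoe : ((c:ℂ))^d = 2 := by rw [← Complex.ofReal_pow, hcd]; norm_num
  have hfix : ∀ σ : K →ₐ[ℚ] ℂ,
      σ ((⟨(c:ℂ), hmem⟩ : K) * ⟨(c:ℂ), hmem⟩) = (((⟨(c:ℂ), hmem⟩ : K) * ⟨(c:ℂ), hmem⟩ : K) : ℂ) := by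
    intro σ
    have key : ∀ z : K, (z:ℂ) = u →
        (starRingEnd ℂ) (σ (τ z)) = σ z := by
      intro z hz
      have hz2d : z ^ (2*d) = 1 := by
        apply Subtype.ext
        push_cast [hz]
        exact hupow
      have hσz : (σ z)^(2*d) = 1 := by rw [← map_pow, hz2d, map_one]
      have hσznorm : ‖σ z‖ = 1 := Complex.norm_eq_one_of_pow_eq_one hσz h2d0
      have hτz : τ z = z⁻¹ := by
        apply Subtype.ext
        rw [hτ, hz, IntermediateField.coe_inv, hz]
        exact (RCLike.inv_eq_conj hunorm).symm
      rw [hτz, map_inv₀, RCLike.inv_eq_conj hσznorm]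
      exact Complex.conj_conj _
    have hagree : ((Complex.conjAe.restrictScalars ℚ).toAlgHom).comp (σ.comp τ) = σ := by
      apply adjoin_algHom_ext
      intro x hx
      exact key ⟨x, subset_adjoin ℚ {u} hx⟩ (Set.mem_singleton_iff.mp hx)
    have hτc : τ (⟨(c:ℂ), hmem⟩ : K) = ⟨(c:ℂ), hmem⟩ := by
      apply Subtype.ext
      rw [hτ]
      exact Complex.conj_ofReal c
    have hreal : (starRingEnd ℂ) (σ ⟨(c:ℂ), hmem⟩) = σ ⟨(c:ℂ), hmem⟩ := by
      have := congrArg (fun φ : K →ₐ[ℚ] ℂ => φ ⟨(c:ℂ), hmem⟩) hagree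
      simpa [hτc] using this
    obtain ⟨r, hr⟩ := Complex.conj_eq_iff_real.mp hreal
    have hcKd : (⟨(c:ℂ), hmem⟩ : K) ^ d = 2 := by
      apply Subtype.ext
      push_cast
      exact hccoe
    have hσcd : (σ ⟨(c:ℂ), hmem⟩)^d = 2 := by rw [← map_pow, hcKd, map_ofNat]
    rw [hr] at hσcd
    have hrd : r ^ d = 2 := by exact_mod_cast hσcd
    have habs : |r| = c := by
      refine (pow_left_inj₀ (abs_nonneg r) hc.le hd0).mp ?_
      rw [← abs_pow, hrd, hcd]
      norm_num
    have hr2 : r * r = c * c := by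
      have h1 : r^2 = c^2 := by rw [← sq_abs, habs]
      linear_combination h1
    rw [map_mul, hr]
    push_cast
    exact_mod_cast congrArg (fun t : ℝ => (t:ℂ)) hr2
  obtain ⟨q, hq⟩ := exists_rat_of_fixed ((⟨(c:ℂ), hmem⟩ : K) * ⟨(c:ℂ), hmem⟩) hfix
  have hq'' : ((c:ℂ)) * ((c:ℂ)) = (q:ℂ) := by
    rw [← hq]
    push_cast
    ring
  have hq' : c * c = (q:ℝ) := by exact_mod_cast hq'' 
  have hq4 : q ^ d = 4 := by
    have h4 : ((q:ℝ)) ^ d = 4 := by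
      rw [← hq', mul_pow, hcd]
      norm_num
    exact_mod_cast h4
  exact rat_pow_ne_four hd q hq4

private lemma beta_eq_zero {d : ℕ} (hd : 3 ≤ d) {u : ℂ} (hu : IsPrimitiveRoot u (2 * d))
    {c : ℝ} (hc : 0 < c) (hcd : c ^ d = 2)
    {α β γ : ℂ} (hα : α ∈ adjoin ℚ ({u} : Set ℂ)) (hβ : β ∈ adjoin ℚ ({u} : Set ℂ))
    (hγ : γ ∈ adjoin ℚ ({u} : Set ℂ))
    (heq : α + β * (c:ℂ) + γ * (c:ℂ) ^ 2 = 0) : β = 0 := by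
  by_contra hβ0
  have hd0 : d ≠ 0 := by omega
  set K := adjoin ℚ ({u} : Set ℂ) with hKdef
  have huK : u ∈ K := subset_adjoin ℚ {u} rfl
  have hcK : (c:ℂ) ∉ K := c_not_mem hd hu hc hcd
  have hccoe : ((c:ℂ))^d = 2 := by rw [← Complex.ofReal_pow, hcd]; norm_num
  have hc0 : (c:ℂ) ≠ 0 := Complex.ofReal_ne_zero.mpr hc.ne'
  have hγ0 : γ ≠ 0 := by
    rintro rfl
    apply hcK
    have hβc : (c:ℂ) = -α * β⁻¹ := by
      rw [eq_mul_inv_iff_mul_eq₀ hβ0]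
      linear_combination heq
    rw [hβc]
    exact K.mul_mem (K.neg_mem hα) (K.inv_mem hβ)
  have h2K : (((2:K)):ℂ) = 2 := by norm_cast
  have hint : IsIntegral K ((c:ℂ)) := ⟨X ^ d - C (2:K), monic_X_pow_sub_C _ hd0,
    by simp [hccoe, h2K]⟩
  set μ := minpoly K ((c:ℂ)) with hμdef
  have hμdvd2 : μ ∣ X ^ d - C (2:K) := minpoly.dvd K _ (by simp [hccoe, h2K])
  set f : Polynomial K := C (⟨γ, hγ⟩ : K) * X ^ 2 + C ⟨β, hβ⟩ * X + C ⟨α, hα⟩ with hfdef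
  have hmapapp : ∀ x : K, algebraMap K ℂ x = (x:ℂ) := fun _ => rfl
  have haevalf : aeval ((c:ℂ)) f = 0 := by
    rw [hfdef]
    simp only [map_add, map_mul, map_pow, aeval_C, aeval_X, hmapapp]
    linear_combination heq
  have hcoeff1 : f.coeff 1 = ⟨β, hβ⟩ := by
    rw [hfdef]
    simp only [coeff_add, coeff_C_mul, coeff_X_pow, coeff_X, coeff_C]
    norm_num
  have hcoeff2 : f.coeff 2 = ⟨γ, hγ⟩ := by
    rw [hfdef]
    simp only [coeff_add, coeff_C_mul, coeff_X_pow, coeff_X, coeff_C]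
    norm_num
  have hfne : f ≠ 0 := by
    intro h
    rw [h, coeff_zero] at hcoeff1
    exact hβ0 (by simpa using congrArg Subtype.val hcoeff1.symm)
  have hμdvdf : μ ∣ f := minpoly.dvd K _ haevalf
  have hγK0 : (⟨γ, hγ⟩ : K) ≠ 0 := fun h => hγ0 (by simpa using congrArg Subtype.val h)
  have hdegf : f.natDegree = 2 := by rw [hfdef]; exact natDegree_quadratic hγK0
  have hμdeg : μ.natDegree = 2 := by
    have h1 : 2 ≤ μ.natDegree := by
      rw [hμdef, minpoly.two_le_natDegree_iff hint]
      rintro ⟨y, hy⟩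
      exact hcK (hy ▸ y.2)
    have h2 : μ.natDegree ≤ 2 := hdegf ▸ natDegree_le_of_dvd hμdvdf hfne
    omega
  obtain ⟨k, hk⟩ := hμdvdf
  have hμne : μ ≠ 0 := minpoly.ne_zero hint
  have hkne : k ≠ 0 := fun h => hfne (by rw [hk, h, mul_zero])
  have hdegk : k.natDegree = 0 := by
    have hmul := natDegree_mul hμne hkne
    rw [← hk, hdegf, hμdeg] at hmul
    omega
  obtain ⟨a0, hka⟩ := natDegree_eq_zero.mp hdegk
  have hfμ : f = μ * C a0 := by rw [hk, hka]
  have ha0 : a0 = ⟨γ, hγ⟩ := by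
    have h2 : f.coeff 2 = a0 := by
      rw [hfμ, coeff_mul_C]
      have hμ2 : μ.coeff 2 = 1 := by
        have hm := (minpoly.monic hint).coeff_natDegree
        rwa [hμdeg] at hm
      rw [hμ2, one_mul]
    rw [hcoeff2] at h2
    exact h2.symm
  set c' : ℂ := (-β - γ * (c:ℂ)) / γ with hc'def
  have hγc' : γ * c' = -β - γ * (c:ℂ) := by
    rw [hc'def]
    field_simp
  have haevalf' : aeval c' f = 0 := by
    have hexp : aeval c' f = γ * c'^2 + β * c' + α := by
      rw [hfdef]
      simp only [map_add, map_mul, map_pow, aeval_C, aeval_X, hmapapp]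
    have h0 : γ * (γ * c'^2 + β * c' + α) = 0 := by
      have hre : γ * (γ * c'^2 + β * c' + α) = (γ*c')^2 + β*(γ*c') + α*γ := by ring
      rw [hre, hγc']
      linear_combination γ * heq
    rcases mul_eq_zero.mp h0 with h | h
    · exact absurd h hγ0
    · rw [hexp]; exact h
  have haevalμ' : aeval c' μ = 0 := by
    have hsplit : aeval c' f = aeval c' μ * γ := by
      rw [hfμ, ha0, map_mul, aeval_C, hmapapp]
    rw [haevalf'] at hsplit
    rcases mul_eq_zero.mp hsplit.symm with h | h
    · exact h
    · exact absurd h hγ0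
  have hc'd : c' ^ d = 2 := by
    obtain ⟨g, hg⟩ := hμdvd2
    have hev := congrArg (aeval c') hg
    rw [map_mul, haevalμ', zero_mul, map_sub, map_pow, aeval_X, aeval_C, hmapapp, h2K] at hev
    linear_combination hev
  have hζd : (c' / (c:ℂ)) ^ d = 1 := by
    rw [div_pow, hc'd, hccoe, div_self (by norm_num : (2:ℂ) ≠ 0)]
  haveI : NeZero d := ⟨hd0⟩
  have hu2 : IsPrimitiveRoot (u^2) d := hu.pow (by omega) rfl
  obtain ⟨i, hi, hiu⟩ := hu2.eq_pow_of_pow_eq_one hζd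
  have hζK : c' / (c:ℂ) ∈ K := hiu ▸ K.pow_mem (K.pow_mem huK 2) i
  have hdivc : c' / (c:ℂ) * (c:ℂ) = c' := div_mul_cancel₀ c' hc0
  have hkey : (c:ℂ) * (γ * (1 + c' / (c:ℂ))) = -β := by
    linear_combination hγc' + γ * hdivc
  by_cases h1ζ : 1 + c' / (c:ℂ) = 0
  · rw [h1ζ, mul_zero, mul_zero] at hkey
    exact hβ0 (neg_eq_zero.mp hkey.symm)
  · apply hcK
    have hne : γ * (1 + c' / (c:ℂ)) ≠ 0 := mul_ne_zero hγ0 h1ζ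
    have hcval : (c:ℂ) = -β * (γ * (1 + c' / (c:ℂ)))⁻¹ := by
      rw [eq_mul_inv_iff_mul_eq₀ hne]
      linear_combination hkey
    rw [hcval]
    exact K.mul_mem (K.neg_mem hβ) (K.inv_mem (K.mul_mem hγ (K.add_mem K.one_mem hζK)))



/-- Let `u` be a primitive `2d`-th root of unity and `c` the positive real `d`-th root
of `2`.  If the determinant of the matrix with rows `(u^{2j₁}, 1, u^{-k₁}c)`,
`(u^{2j₂}, 1, u^{-k₂}c)`, `(1, u^{-k_y}c, u^{2j_y})` vanishes, then `j₁ = j₂` and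
`k₁ = k₂`: no line of `ℙ²(ℂ)` contains two distinct sextactic points of the `z`-cluster
of the Fermat curve `F_d` together with a sextactic point of the `y`-cluster. -/
theorem fermat_no_mixed_collinear (d : ℕ) (hd : 3 ≤ d) (u : ℂ)
    (hu : IsPrimitiveRoot u (2 * d)) (c : ℝ) (hc : 0 < c) (hcd : c ^ d = 2)
    (j₁ j₂ jy k₁ k₂ ky : ℕ)
    (hj₁ : j₁ < d) (hj₂ : j₂ < d) (hjy : jy < d)
    (hk₁ : Odd k₁) (hk₂ : Odd k₂) (hky : Odd ky)
    (hk₁' : 0 < k₁ ∧ k₁ < 2 * d) (hk₂' : 0 < k₂ ∧ k₂ < 2 * d) (hky' : 0 < ky ∧ ky < 2 * d)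
    (hdet : Matrix.det !![u ^ (2 * j₁), 1, (u ^ k₁)⁻¹ * (c : ℂ);
                          u ^ (2 * j₂), 1, (u ^ k₂)⁻¹ * (c : ℂ);
                          1, (u ^ ky)⁻¹ * (c : ℂ), u ^ (2 * jy)] = 0) :
    j₁ = j₂ ∧ k₁ = k₂ := by
  have hd0 : d ≠ 0 := by omega
  have h2d0 : 2 * d ≠ 0 := by omega
  have hunorm : ‖u‖ = 1 := hu.norm'_eq_one h2d0
  set K := adjoin ℚ ({u} : Set ℂ) with hKdef
  have huK : u ∈ K := subset_adjoin ℚ {u} rfl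
  have hdet' : u ^ (2*jy) * (u^(2*j₁) - u^(2*j₂))
      + ((u^k₂)⁻¹ - (u^k₁)⁻¹) * (c:ℂ)
      + ((u^ky)⁻¹ * (u^(2*j₂) * (u^k₁)⁻¹ - u^(2*j₁) * (u^k₂)⁻¹)) * (c:ℂ)^2 = 0 := by
    rw [Matrix.det_fin_three] at hdet
    simp at hdet
    linear_combination hdet
  have hmemα : u ^ (2*jy) * (u^(2*j₁) - u^(2*j₂)) ∈ K :=
    mul_mem (pow_mem huK _) (sub_mem (pow_mem huK _) (pow_mem huK _))
  have hmemβ : (u^k₂)⁻¹ - (u^k₁)⁻¹ ∈ K :=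
    sub_mem (inv_mem (pow_mem huK _)) (inv_mem (pow_mem huK _))
  have hmemγ : (u^ky)⁻¹ * (u^(2*j₂) * (u^k₁)⁻¹ - u^(2*j₁) * (u^k₂)⁻¹) ∈ K :=
    mul_mem (inv_mem (pow_mem huK _))
      (sub_mem (mul_mem (pow_mem huK _) (inv_mem (pow_mem huK _)))
        (mul_mem (pow_mem huK _) (inv_mem (pow_mem huK _))))
  have hβ0 : (u^k₂)⁻¹ - (u^k₁)⁻¹ = 0 := beta_eq_zero hd hu hc hcd hmemα hmemβ hmemγ hdet'
  have hk12 : k₁ = k₂ := by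
    have h1 : u^k₁ = u^k₂ := inv_injective (by linear_combination -hβ0)
    exact hu.pow_inj hk₁'.2 hk₂'.2 h1
  subst hk12
  refine ⟨?_, rfl⟩
  have hfac : (u^(2*j₁) - u^(2*j₂)) * (u^(2*jy) - (c:ℂ)^2 * ((u^ky)⁻¹ * (u^k₁)⁻¹)) = 0 := by
    linear_combination hdet'
  have hne2 : u^(2*jy) - (c:ℂ)^2 * ((u^ky)⁻¹ * (u^k₁)⁻¹) ≠ 0 := by
    intro h0
    have he : u^(2*jy) = (c:ℂ)^2 * ((u^ky)⁻¹ * (u^k₁)⁻¹) := by linear_combination h0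
    have hn := congrArg norm he
    simp only [norm_mul, norm_pow, norm_inv, hunorm, Complex.norm_real,
      Real.norm_of_nonneg hc.le, one_pow, inv_one, mul_one, one_mul] at hn
    -- hn : 1 = c^2
    have hc1 : c = 1 := by
      exact (pow_left_inj₀ hc.le zero_le_one (two_ne_zero)).mp (by rw [← hn]; norm_num)
    rw [hc1, one_pow] at hcd
    norm_num at hcd
  rcases mul_eq_zero.mp hfac with h | h
  · have h1 : u^(2*j₁) = u^(2*j₂) := by linear_combination h
    have := hu.pow_inj (by omega) (by omega) h1
    omega
  · exact absurd h hne2
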